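/- arXiv:1702.06471 — 4 statements merged into one kernel-verified Lean document; each statement's English description precedes it below -/
import Mathlib

section
/- Let A be a unital commutative C*-algebra, f₀ ∈ A with ‖f₀‖ < 1, and define T(f) = (f - f₀)·(1 - f₀*·f)⁻¹ on the open unit ball of A. Then T is Lipschitz on the open unit ball with Lipschitz constant 1/(1 - ‖f₀‖)²; that is, for all f, g with ‖f‖ < 1 and ‖g‖ < 1, ‖T(f) - T(g)‖ ≤ ‖f - g‖ / (1 - ‖f₀‖)². -/
open WeakDual

/-- In a unital commutative C*-algebra, `‖1 - a * a*‖ ≤ 1` whenever `‖a‖ ≤ 1`. -/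
lemma aux_norm_one_sub_mul_star
    {A : Type*} [NormedCommRing A] [StarRing A] [CStarRing A]
    [NormedAlgebra ℂ A] [StarModule ℂ A] [CompleteSpace A]
    (a : A) (ha : ‖a‖ ≤ 1) : ‖1 - a * star a‖ ≤ 1 := by
  nontriviality A
  letI : CommCStarAlgebra A := { ‹NormedCommRing A›, ‹StarRing A›, ‹CStarRing A›, ‹NormedAlgebra ℂ A›,
    ‹StarModule ℂ A›, ‹CompleteSpace A› with }
  have hiso := gelfandTransform_isometry A
  have hnorm : ‖gelfandTransform ℂ A (1 - a * star a)‖ = ‖1 - a * star a‖ := by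
    simpa [dist_zero_right, map_zero] using hiso.dist_eq (1 - a * star a) 0
  rw [← hnorm]
  refine (ContinuousMap.norm_le _ zero_le_one).mpr fun φ => ?_
  have hφ : ‖φ a‖ ≤ ‖a‖ := spectrum.norm_le_norm_of_mem (AlgHom.apply_mem_spectrum φ a)
  have : (gelfandTransform ℂ A (1 - a * star a)) φ = 1 - φ a * star (φ a) := by
    simp [map_sub, map_mul, map_one, map_star]
  rw [this]
  have h2 : (0:ℝ) ≤ ‖φ a‖ := norm_nonneg _
  have h3 : ‖φ a‖ ≤ 1 := hφ.trans ha
  have : φ a * star (φ a) = ((‖φ a‖ ^ 2 : ℝ) : ℂ) := by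
    simp [Complex.mul_conj, Complex.normSq_eq_norm_sq, sq]
  rw [this, ← Complex.ofReal_one, ← Complex.ofReal_sub, Complex.norm_real]
  rw [Real.norm_eq_abs, abs_le]
  constructor <;> nlinarith

lemma aux_norm_inverse_one_sub_le
    {A : Type*} [NormedCommRing A] [StarRing A] [CStarRing A]
    [NormedAlgebra ℂ A] [StarModule ℂ A] [CompleteSpace A]
    (x : A) (h : ‖x‖ < 1) : ‖Ring.inverse (1 - x)‖ ≤ (1 - ‖x‖)⁻¹ := by
  rcases subsingleton_or_nontrivial A with hs | hn
  · have : Ring.inverse (1 - x) = 0 := Subsingleton.elim _ _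
    rw [this, norm_zero]
    have : (0:ℝ) < 1 - ‖x‖ := by linarith
    positivity
  · rw [← geom_series_eq_inverse x h]
    have := tsum_geometric_le_of_norm_lt_one x h
    simpa [norm_one] using this

/-- The Möbius-type map `T(f) = (f - f₀)(1 - f₀* f)⁻¹` is Lipschitz on the open unit
ball of a unital commutative C*-algebra, with constant `1/(1 - ‖f₀‖)²`. -/
theorem mobius_lipschitz_on_ball
    {A : Type*} [NormedCommRing A] [StarRing A] [CStarRing A]
    [NormedAlgebra ℂ A] [StarModule ℂ A] [CompleteSpace A]
    (f₀ : A) (h₀ : ‖f₀‖ < 1)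
    (T : A → A) (hT : ∀ f, T f = (f - f₀) * Ring.inverse (1 - star f₀ * f)) :
    ∀ f g : A, ‖f‖ < 1 → ‖g‖ < 1 →
      ‖T f - T g‖ ≤ ‖f - g‖ / (1 - ‖f₀‖) ^ 2 := by
  intro f g hf hg
  have h₀0 : (0:ℝ) ≤ ‖f₀‖ := norm_nonneg _
  have hpos : (0:ℝ) < 1 - ‖f₀‖ := by linarith
  have hns : ‖star f₀‖ = ‖f₀‖ := norm_star f₀
  have haf : ‖star f₀ * f‖ ≤ ‖f₀‖ := by
    calc ‖star f₀ * f‖ ≤ ‖star f₀‖ * ‖f‖ := norm_mul_le _ _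
    _ ≤ ‖f₀‖ := by rw [hns]; nlinarith [norm_nonneg f]
  have hag : ‖star f₀ * g‖ ≤ ‖f₀‖ := by
    calc ‖star f₀ * g‖ ≤ ‖star f₀‖ * ‖g‖ := norm_mul_le _ _
    _ ≤ ‖f₀‖ := by rw [hns]; nlinarith [norm_nonneg g]
  have huf : ‖star f₀ * f‖ < 1 := lt_of_le_of_lt haf h₀
  have hug : ‖star f₀ * g‖ < 1 := lt_of_le_of_lt hag h₀
  have hUf : IsUnit (1 - star f₀ * f) := isUnit_one_sub_of_norm_lt_one huf
  have hUg : IsUnit (1 - star f₀ * g) := isUnit_one_sub_of_norm_lt_one hug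
  set u := 1 - star f₀ * f with hu
  set v := 1 - star f₀ * g with hv
  have hufi : u * Ring.inverse u = 1 := Ring.mul_inverse_cancel _ hUf
  have hvgi : v * Ring.inverse v = 1 := Ring.mul_inverse_cancel _ hUg
  have key : T f - T g =
      ((1 - f₀ * star f₀) * (f - g)) * (Ring.inverse u * Ring.inverse v) := by
    rw [hT, hT]
    have hnum : (f - f₀) * v - (g - f₀) * u = (1 - f₀ * star f₀) * (f - g) := by
      rw [hu, hv]; ring
    calc (f - f₀) * Ring.inverse u - (g - f₀) * Ring.inverse v
        = ((f - f₀) * v - (g - f₀) * u) * (Ring.inverse u * Ring.inverse v) := by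
          linear_combination (g - f₀) * Ring.inverse v * hufi
            - (f - f₀) * Ring.inverse u * hvgi
      _ = ((1 - f₀ * star f₀) * (f - g)) * (Ring.inverse u * Ring.inverse v) := by
          rw [hnum]
  have hbound1 : ‖(1:A) - f₀ * star f₀‖ ≤ 1 := aux_norm_one_sub_mul_star f₀ h₀.le
  have hiu : ‖Ring.inverse u‖ ≤ (1 - ‖f₀‖)⁻¹ := by
    refine (aux_norm_inverse_one_sub_le _ huf).trans ?_
    apply inv_anti₀ hpos
    linarith
  have hiv : ‖Ring.inverse v‖ ≤ (1 - ‖f₀‖)⁻¹ := by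
    refine (aux_norm_inverse_one_sub_le _ hug).trans ?_
    apply inv_anti₀ hpos
    linarith
  have hiu0 : (0:ℝ) ≤ ‖Ring.inverse u‖ := norm_nonneg _
  have hiv0 : (0:ℝ) ≤ ‖Ring.inverse v‖ := norm_nonneg _
  calc ‖T f - T g‖
      = ‖((1 - f₀ * star f₀) * (f - g)) * (Ring.inverse u * Ring.inverse v)‖ := by rw [key]
    _ ≤ ‖(1 - f₀ * star f₀) * (f - g)‖ * ‖Ring.inverse u * Ring.inverse v‖ := norm_mul_le _ _
    _ ≤ (‖(1:A) - f₀ * star f₀‖ * ‖f - g‖) * (‖Ring.inverse u‖ * ‖Ring.inverse v‖) := by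
        gcongr <;> [exact norm_mul_le _ _; exact norm_mul_le _ _]
    _ ≤ (1 * ‖f - g‖) * ((1 - ‖f₀‖)⁻¹ * (1 - ‖f₀‖)⁻¹) := by
        gcongr
    _ = ‖f - g‖ / (1 - ‖f₀‖) ^ 2 := by
        rw [one_mul, sq]
        field_simp
end

section
/- Let A be a unital commutative C*-algebra, f₀ ∈ A with ‖f₀‖ < 1, and T_{f₀}(f) = (f - f₀)·(1 - f₀*·f)⁻¹ defined on the open unit ball. Then T_{f₀} maps the open unit ball into itself and T_{-f₀} is a two-sided inverse of T_{f₀} on the open unit ball, so T_{f₀} is a bijection of the open unit ball onto itself. -/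
open WeakDual Complex

private lemma mobius_real_ineq {a b t r r₀ : ℝ} (ha : 0 ≤ a) (hb : 0 ≤ b)
    (har : a ≤ r) (hbr : b ≤ r₀) (hr : r < 1) (hr₀ : r₀ < 1) (ht : -(a*b) ≤ t) :
    (a^2 + b^2 - 2*t) * (1 + r*r₀)^2 ≤ (r + r₀)^2 * (1 - 2*t + a^2*b^2) := by
  have hr0 : 0 ≤ r := ha.trans har
  have hr₀0 : 0 ≤ r₀ := hb.trans hbr
  have hrr : r₀ * r₀ < 1 := by simpa using mul_lt_mul' hr₀.le hr₀ hr₀0 one_pos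
  have hraa : r * r < 1 := by simpa using mul_lt_mul' hr.le hr hr0 one_pos
  have hbr1 : b * r₀ < 1 := by nlinarith [mul_le_mul_of_nonneg_right hbr hr₀0]
  have har1 : a * r < 1 := by nlinarith [mul_le_mul_of_nonneg_right har hr0]
  have h1 : 0 ≤ (r - a) * (1 - b*r₀) := mul_nonneg (by linarith) (by linarith)
  have h2 : 0 ≤ (r₀ - b) * (1 - a*r) := mul_nonneg (by linarith) (by linarith)
  have hlin : (a + b) * (1 + r*r₀) ≤ (r + r₀) * (1 + a*b) := by nlinarith
  have hX : 0 ≤ (a + b) * (1 + r*r₀) := by positivity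
  have hmain : ((a + b) * (1 + r*r₀))^2 ≤ ((r + r₀) * (1 + a*b))^2 := by
    nlinarith [mul_self_le_mul_self hX hlin]
  have hcoef : 0 ≤ (1 + r*r₀)^2 - (r + r₀)^2 := by
    nlinarith [mul_nonneg (mul_nonneg (mul_nonneg (by linarith : (0:ℝ) ≤ 1 + r)
      (by linarith : (0:ℝ) ≤ 1 + r₀)) (by linarith : (0:ℝ) ≤ 1 - r))
      (by linarith : (0:ℝ) ≤ 1 - r₀)]
  nlinarith [mul_nonneg (by linarith : (0:ℝ) ≤ t + a*b) hcoef, hmain]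

private lemma mobius_scalar {z w : ℂ} {r r₀ : ℝ} (hz : ‖z‖ ≤ r) (hw : ‖w‖ ≤ r₀)
    (hr : r < 1) (hr₀ : r₀ < 1) :
    ‖(z - w) * (1 - (starRingEnd ℂ) w * z)⁻¹‖ ≤ (r + r₀) / (1 + r * r₀) := by
  have ha : 0 ≤ ‖z‖ := norm_nonneg z
  have hb : 0 ≤ ‖w‖ := norm_nonneg w
  have hr0 : 0 ≤ r := ha.trans hz
  have hr₀0 : 0 ≤ r₀ := hb.trans hw
  have hwz : ‖(starRingEnd ℂ) w * z‖ = ‖w‖ * ‖z‖ := by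
    rw [norm_mul, RCLike.norm_conj]
  have hdn : 0 < ‖1 - (starRingEnd ℂ) w * z‖ := by
    have := norm_sub_norm_le (1 : ℂ) ((starRingEnd ℂ) w * z)
    rw [norm_one] at this
    nlinarith
  rw [norm_mul, norm_inv, ← div_eq_mul_inv,
    div_le_div_iff₀ hdn (by nlinarith : (0:ℝ) < 1 + r * r₀)]
  set t : ℝ := ((starRingEnd ℂ) w * z).re with htdef
  have ht : -(‖z‖ * ‖w‖) ≤ t := by
    have h1 : |t| ≤ ‖(starRingEnd ℂ) w * z‖ := Complex.abs_re_le_norm _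
    rw [hwz] at h1
    have := (abs_le.mp h1).1
    linarith
  have e1 : ‖z - w‖^2 = ‖z‖^2 + ‖w‖^2 - 2*t := by
    rw [Complex.sq_norm, Complex.sq_norm,
      Complex.sq_norm, Complex.normSq_sub, htdef, mul_comm z ((starRingEnd ℂ) w)]
  have e2 : ‖1 - (starRingEnd ℂ) w * z‖^2 = 1 - 2*t + ‖z‖^2 * ‖w‖^2 := by
    rw [Complex.sq_norm, Complex.sq_norm,
      Complex.sq_norm, Complex.normSq_sub]
    simp only [Complex.normSq_mul, Complex.normSq_conj, Complex.normSq_one, one_mul,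
      map_mul, Complex.conj_conj, htdef]
    have hre : (w * (starRingEnd ℂ) z).re = ((starRingEnd ℂ) w * z).re := by
      simp [Complex.mul_re]
    rw [hre]
    ring
  have key := mobius_real_ineq ha hb hz hw hr hr₀ ht
  have hsq : (‖z - w‖ * (1 + r*r₀))^2 ≤ ((r + r₀) * ‖1 - (starRingEnd ℂ) w * z‖)^2 := by
    nlinarith [key, e1, e2]
  nlinarith [hsq, norm_nonneg (z - w), mul_nonneg (by linarith : (0:ℝ) ≤ r + r₀) hdn.le,
    mul_nonneg (norm_nonneg (z - w)) (by nlinarith : (0:ℝ) ≤ 1 + r*r₀)]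

private lemma mobius_inv {A : Type*} [NormedCommRing A] [StarRing A] [CStarRing A]
    [CompleteSpace A] (g f : A) (hg : ‖g‖ < 1) (hf : ‖f‖ < 1) :
    ((f - g) * Ring.inverse (1 - star g * f) - (-g)) *
      Ring.inverse (1 - star (-g) * ((f - g) * Ring.inverse (1 - star g * f))) = f := by
  have hgf : ‖star g * f‖ < 1 := by
    calc ‖star g * f‖ ≤ ‖star g‖ * ‖f‖ := norm_mul_le _ _
      _ = ‖g‖ * ‖f‖ := by rw [norm_star]
      _ < 1 := by nlinarith [norm_nonneg f, norm_nonneg g]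
  have hgg : ‖star g * g‖ < 1 := by
    calc ‖star g * g‖ ≤ ‖star g‖ * ‖g‖ := norm_mul_le _ _
      _ = ‖g‖ * ‖g‖ := by rw [norm_star]
      _ < 1 := by nlinarith [norm_nonneg g]
  set u : Aˣ := Units.oneSub _ hgf with hudef
  set v : Aˣ := Units.oneSub _ hgg with hvdef
  have hu : (u : A) = 1 - star g * f := rfl
  have hv : (v : A) = 1 - star g * g := rfl
  have hinv1 : Ring.inverse (1 - star g * f) = ((u⁻¹ : Aˣ) : A) := by
    rw [← hu, Ring.inverse_unit]
  have h1 : ((u⁻¹ : Aˣ) : A) * (1 - star g * f) = 1 := by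
    rw [← hu]; exact u.inv_mul
  have key : 1 - star (-g) * ((f - g) * ((u⁻¹ : Aˣ) : A)) = ((v * u⁻¹ : Aˣ) : A) := by
    rw [Units.val_mul, hv, star_neg]
    linear_combination (-1 : A) * h1
  rw [hinv1, key, Ring.inverse_unit]
  have h2 : (((v * u⁻¹)⁻¹ : Aˣ) : A) = (u : A) * ((v⁻¹ : Aˣ) : A) := by
    rw [mul_inv, inv_inv, Units.val_mul, mul_comm]
  have h3 : ((v⁻¹ : Aˣ) : A) * (1 - star g * g) = 1 := by
    rw [← hv]; exact v.inv_mul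
  rw [h2, hu]
  linear_combination ((f - g) * ((v⁻¹ : Aˣ) : A)) * h1 + f * h3

/-- The Möbius-type map `T_{f₀}(f) = (f - f₀)(1 - f₀* f)⁻¹` maps the open unit ball of
a unital commutative C*-algebra into itself, and `T_{-f₀}` is a two-sided inverse of
`T_{f₀}` on the open unit ball; hence `T_{f₀}` is a bijection of the ball onto itself. -/
theorem mobius_bijection_ball
    {A : Type*} [NormedCommRing A] [StarRing A] [CStarRing A]
    [NormedAlgebra ℂ A] [StarModule ℂ A] [CompleteSpace A]
    (f₀ : A) (h₀ : ‖f₀‖ < 1)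
    (T : A → A → A)
    (hT : ∀ g f, T g f = (f - g) * Ring.inverse (1 - star g * f)) :
    ∀ f : A, ‖f‖ < 1 →
      ‖T f₀ f‖ < 1 ∧ T (-f₀) (T f₀ f) = f ∧ T f₀ (T (-f₀) f) = f := by
  letI : CStarAlgebra A := {}
  letI : CommCStarAlgebra A := {}
  have hnorm : ∀ a : A, ‖gelfandTransform ℂ A a‖ = ‖a‖ := fun a => by
    simpa using (gelfandTransform_isometry A).norm_map_of_map_zero (map_zero _) a
  have bound : ∀ g f : A, ‖g‖ < 1 → ‖f‖ < 1 → ‖T g f‖ < 1 := by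
    intro g f hg hf
    have hgf : ‖star g * f‖ < 1 := by
      calc ‖star g * f‖ ≤ ‖star g‖ * ‖f‖ := norm_mul_le _ _
        _ = ‖g‖ * ‖f‖ := by rw [norm_star]
        _ < 1 := by nlinarith [norm_nonneg f, norm_nonneg g]
    have hM0 : (0:ℝ) ≤ (‖f‖ + ‖g‖) / (1 + ‖f‖ * ‖g‖) := by positivity
    have hM1 : (‖f‖ + ‖g‖) / (1 + ‖f‖ * ‖g‖) < 1 := by
      rw [div_lt_one (by positivity)]
      nlinarith [norm_nonneg f, norm_nonneg g]
    refine lt_of_le_of_lt ?_ hM1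
    rw [← hnorm]
    rw [ContinuousMap.norm_le _ hM0]
    intro φ
    have hφ : ∀ a : A, ‖φ a‖ ≤ ‖a‖ := fun a => by
      rw [← hnorm a]
      exact ContinuousMap.norm_coe_le_norm (gelfandTransform ℂ A a) φ
    have hu : IsUnit (1 - star g * f) := (Units.oneSub _ hgf).isUnit
    have hh : T g f * (1 - star g * f) = f - g := by
      rw [hT, mul_assoc, Ring.inverse_mul_cancel _ hu, mul_one]
    have hden : (1 : ℂ) - (starRingEnd ℂ) (φ g) * φ f ≠ 0 := by
      intro h
      have h1 : ‖(starRingEnd ℂ) (φ g) * φ f‖ < 1 := by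
        rw [norm_mul, RCLike.norm_conj]
        calc ‖φ g‖ * ‖φ f‖ ≤ ‖g‖ * ‖f‖ := by
              apply mul_le_mul (hφ g) (hφ f) (norm_nonneg _) (norm_nonneg _)
          _ < 1 := by nlinarith [norm_nonneg f, norm_nonneg g]
      rw [sub_eq_zero] at h
      rw [← h] at h1
      simp at h1
    have hφT := congrArg φ hh
    simp only [map_mul, map_sub, map_one, map_star] at hφT
    have hTφ : φ (T g f) = (φ f - φ g) * (1 - (starRingEnd ℂ) (φ g) * φ f)⁻¹ := by
      rw [← div_eq_mul_inv, eq_div_iff hden]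
      exact hφT
    show ‖(gelfandTransform ℂ A (T g f)) φ‖ ≤ _
    rw [gelfandTransform_apply_apply, hTφ]
    exact mobius_scalar (hφ f) (hφ g) hf hg
  intro f hf
  refine ⟨bound f₀ f h₀ hf, ?_, ?_⟩
  · rw [hT (-f₀), hT f₀]
    exact mobius_inv f₀ f h₀ hf
  · have h₀' : ‖-f₀‖ < 1 := by simpa using h₀
    have h := mobius_inv (-f₀) f h₀' hf
    rw [hT f₀, hT (-f₀)]
    simpa [neg_neg] using h
end

section
/- Let X be a complex Banach space, x a point of the unit sphere, and x* a norm-one functional with x*(x) = 1. Suppose for every ε > 0 there is δ > 0 such that y in the closed unit ball with Re(x*(y)) > 1 - δ implies ‖y - x‖ < ε. Then the function f = (1 + x*)/2 peaks strongly at x on the closed unit ball: f(x) = 1, and for every ε > 0 there is σ > 0 such that every y in the closed unit ball with ‖y - x‖ ≥ ε satisfies |f(y)| < 1 - σ. -/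
/-- If `x*` is a norming functional at a unit vector `x` whose real-part slices shrink
to `x`, then `f = (1 + x*)/2` peaks strongly at `x` on the closed unit ball. -/
theorem half_one_add_functional_peaks_strongly
    {X : Type*} [NormedAddCommGroup X] [NormedSpace ℂ X] [CompleteSpace X]
    (x : X) (hx : ‖x‖ = 1)
    (x' : X →L[ℂ] ℂ) (hx'norm : ‖x'‖ = 1) (hx'x : x' x = 1)
    (hslice : ∀ ε > 0, ∃ δ > 0, ∀ y : X, ‖y‖ ≤ 1 → 1 - δ < (x' y).re → ‖y - x‖ < ε)
    (f : X → ℂ) (hf : ∀ y, f y = (1 + x' y) / 2) :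
    f x = 1 ∧ ∀ ε > 0, ∃ σ > 0, ∀ y : X, ‖y‖ ≤ 1 → ε ≤ ‖y - x‖ →
      ‖f y‖ < 1 - σ := by
  constructor
  · rw [hf, hx'x]; norm_num
  · intro ε hε
    obtain ⟨δ, hδ, hδ'⟩ := hslice ε hε
    set d := min δ 2 with hd
    have hd0 : 0 < d := lt_min hδ (by norm_num)
    have hd2 : d ≤ 2 := min_le_right _ _
    refine ⟨d / 8, by linarith, fun y hy hyx => ?_⟩
    have hre : (x' y).re ≤ 1 - d := by
      by_contra h
      push_neg at h
      have : 1 - δ < (x' y).re := by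
        have := min_le_left δ 2
        linarith
      exact absurd (hδ' y hy this) (not_lt.mpr hyx)
    have habs : ‖x' y‖ ≤ 1 := by
      calc ‖x' y‖ = ‖x' y‖ := rfl
        _ ≤ ‖x'‖ * ‖y‖ := x'.le_opNorm y
        _ ≤ 1 := by rw [hx'norm]; nlinarith
    set z := x' y
    have h1 : (‖1 + z‖)^2 = 1 + 2 * z.re + (‖z‖)^2 := by
      rw [Complex.sq_norm, Complex.sq_norm, Complex.normSq_apply, Complex.normSq_apply]
      simp [Complex.add_re, Complex.add_im]
      ring
    have h2 : (‖1 + z‖)^2 ≤ 4 - 2 * d := by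
      nlinarith [norm_nonneg z]
    have h3 : ‖f y‖ = ‖1 + z‖ / 2 := by
      rw [hf]
      rw [norm_div, Complex.norm_two]
    rw [h3]
    nlinarith [norm_nonneg (1 + z), sq_nonneg (‖1 + z‖ - (2 - d/4))]
end

section
/- If X is a complex Banach space locally uniformly convex at a point x of its unit sphere, then x is a strong peak point for the ball algebra A(B) on the closed unit ball: there exists f in A(B) with f(x) = 1 such that for every ε > 0 there is δ > 0 with |f(y)| < 1 - δ whenever y is in the closed unit ball and ‖y - x‖ > ε. -/
open Filter Topology

/-- If a complex Banach space is locally uniformly convex at a point `x` of its unit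
sphere, then `x` is a strong peak point for the ball algebra: there is a function of
the form `f = (1 + x*)/2`, with `x*` a norm-one continuous linear functional, such
that `f(x) = 1` and for every `ε > 0` there is `δ > 0` with `|f(y)| < 1 - δ`
whenever `‖y‖ ≤ 1` and `‖y - x‖ > ε`. -/
theorem luc_strong_peak_point
    {X : Type*} [NormedAddCommGroup X] [NormedSpace ℂ X] [CompleteSpace X]
    (x : X) (hx : ‖x‖ = 1)
    (hluc : ∀ y : ℕ → X, Tendsto (fun n => ‖y n‖) atTop (𝓝 1) →
      Tendsto (fun n => ‖x + y n‖) atTop (𝓝 2) →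
      Tendsto (fun n => ‖y n - x‖) atTop (𝓝 0)) :
    ∃ x' : X →L[ℂ] ℂ, ‖x'‖ = 1 ∧ (1 + x' x) / 2 = 1 ∧
      ∀ ε > 0, ∃ δ > 0, ∀ y : X, ‖y‖ ≤ 1 → ε < ‖y - x‖ →
        ‖(1 + x' y) / 2‖ < 1 - δ := by
  have hx0 : x ≠ 0 := by
    intro h; rw [h, norm_zero] at hx; norm_num at hx
  obtain ⟨g, hg1, hgx⟩ := exists_dual_vector ℂ x (norm_ne_zero_iff.mpr hx0)
  refine ⟨g, hg1, by rw [hgx, hx]; norm_num, ?_⟩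
  intro ε hε
  by_contra hcon
  push_neg at hcon
  -- for each n, pick y n with ‖y n‖ ≤ 1, ε < ‖y n - x‖, 1 - 1/(n+1) ≤ |f (y n)|
  have hsel : ∀ n : ℕ, ∃ y : X, ‖y‖ ≤ 1 ∧ ε < ‖y - x‖ ∧
      1 - 1/(n+1 : ℝ) ≤ ‖(1 + g y) / 2‖ := by
    intro n
    obtain ⟨y, hy1, hy2, hy3⟩ := hcon (1/(n+1 : ℝ)) (by positivity)
    exact ⟨y, hy1, hy2, by linarith⟩
  choose y hy1 hy2 hy3 using hsel
  -- bounds on |g (y n)|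
  have habs : ∀ n, ‖g (y n)‖ ≤ 1 := by
    intro n
    calc ‖g (y n)‖ ≤ ‖g‖ * ‖y n‖ := g.le_opNorm _
    _ ≤ 1 := by rw [hg1]; simpa using hy1 n
  have hlow : ∀ n : ℕ, 1 - 2/((n:ℝ)+1) ≤ ‖g (y n)‖ := by
    intro n
    have h1 : ‖1 + g (y n)‖ ≤ 1 + ‖g (y n)‖ := by
      simpa using norm_add_le (1:ℂ) (g (y n))
    have h2 := hy3 n
    rw [norm_div] at h2
    simp only [Complex.norm_two] at h2
    have hh : 2/((n:ℝ)+1) = 2*(1/((n:ℝ)+1)) := by ring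
    linarith
  have htend0 : Tendsto (fun n : ℕ => 1 - 2/(n+1 : ℝ)) atTop (𝓝 1) := by
    have := tendsto_one_div_add_atTop_nhds_zero_nat (𝕜 := ℝ)
    have h2 : Tendsto (fun n : ℕ => 2/(n+1 : ℝ)) atTop (𝓝 0) := by
      have := this.const_mul (2:ℝ)
      simpa [mul_one_div, div_eq_mul_inv] using this
    simpa using (tendsto_const_nhds.sub h2)
  -- ‖y n‖ → 1
  have hnorm1 : Tendsto (fun n => ‖y n‖) atTop (𝓝 1) := by
    refine tendsto_of_tendsto_of_tendsto_of_le_of_le htend0 tendsto_const_nhds ?_ ?_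
    · intro n
      calc 1 - 2/((n:ℝ)+1) ≤ ‖g (y n)‖ := hlow n
      _ ≤ ‖g‖ * ‖y n‖ := g.le_opNorm _
      _ = ‖y n‖ := by rw [hg1, one_mul]
    · exact hy1
  -- ‖x + y n‖ → 2
  have hnorm2 : Tendsto (fun n => ‖x + y n‖) atTop (𝓝 2) := by
    have hlo : ∀ n : ℕ, 2 - 2 * (2/((n:ℝ)+1)) ≤ ‖x + y n‖ := by
      intro n
      have h2 := hy3 n
      rw [norm_div] at h2
      simp only [Complex.norm_two] at h2
      have h3 : 2 - 2/((n:ℝ)+1) ≤ ‖1 + g (y n)‖ := by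
        have hh : 2/((n:ℝ)+1) = 2*(1/((n:ℝ)+1)) := by ring
        linarith
      have h4 : ‖g (x + y n)‖ ≤ ‖x + y n‖ := by
        calc ‖g (x + y n)‖ ≤ ‖g‖ * ‖x + y n‖ := g.le_opNorm _
        _ = ‖x + y n‖ := by rw [hg1, one_mul]
      have h5 : g (x + y n) = 1 + g (y n) := by
        rw [map_add, hgx, hx]; norm_num
      rw [h5] at h4
      have hpos : (0:ℝ) ≤ 2/((n:ℝ)+1) := by positivity
      linarith
    have hhi : ∀ n, ‖x + y n‖ ≤ 2 := by
      intro n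
      calc ‖x + y n‖ ≤ ‖x‖ + ‖y n‖ := norm_add_le _ _
      _ ≤ 2 := by rw [hx]; linarith [hy1 n]
    refine tendsto_of_tendsto_of_tendsto_of_le_of_le ?_ tendsto_const_nhds hlo hhi
    have h2 : Tendsto (fun n : ℕ => 2/(n+1 : ℝ)) atTop (𝓝 0) := by
      have := tendsto_one_div_add_atTop_nhds_zero_nat.const_mul (2:ℝ)
      simpa [mul_one_div, div_eq_mul_inv] using this
    have h3 := (tendsto_const_nhds (α := ℕ) (f := atTop) (x := (2:ℝ))).sub (h2.const_mul (2:ℝ))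
    simpa using h3
  have := hluc y hnorm1 hnorm2
  have hεlt := this.eventually (eventually_lt_nhds hε)
  obtain ⟨n, hn⟩ := hεlt.exists
  exact absurd (hy2 n) (by linarith)
end
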